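/- For every complex polynomial p and every χ ∈ ℂ, (1/π)·∫_ℂ exp(conj(χ·z))·p(z)·exp(−|z|²) dVol(z) = p(conj χ), where the integral is with respect to the Lebesgue (volume) measure on ℂ. (This is the reproducing-kernel property ⟨Ψ, 𝒦_χ⟩ = Ψ(Δχ) of the holomorphic Gaussian L² space, in the one-dimensional case with unit covariance.) -/

import Mathlib

open MeasureTheory Complex

lemma pow_le_factorial_mul_exp {x : ℝ} (hx : 0 ≤ x) (n : ℕ) :
    x ^ n ≤ (n.factorial : ℝ) * Real.exp x := by
  have h1 : x ^ n / n.factorial ≤ Real.exp x := by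
    calc x ^ n / n.factorial ≤ ∑ i ∈ Finset.range (n+1), x ^ i / i.factorial := by
          refine Finset.single_le_sum (f := fun i => x ^ i / (i.factorial : ℝ)) ?_ ?_
          · intro i _; positivity
          · simp
      _ ≤ Real.exp x := Real.sum_le_exp_of_nonneg hx _
  have hfac : (0:ℝ) < n.factorial := by exact_mod_cast n.factorial_pos
  calc x ^ n = (x ^ n / n.factorial) * n.factorial := by field_simp
    _ ≤ Real.exp x * n.factorial := by
        exact mul_le_mul_of_nonneg_right h1 hfac.le
    _ = (n.factorial : ℝ) * Real.exp x := by ring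

lemma gauss_int_aux (n : ℕ) (a : ℝ) :
    Integrable (fun z : ℂ => ‖z‖ ^ n * Real.exp (a * ‖z‖ - ‖z‖ ^ 2)) := by
  have hbase : Integrable (fun z : ℂ => Real.exp (-(1/2) * ‖z‖ ^ 2)) := by
    rw [← (Complex.volume_preserving_equiv_real_prod.symm).integrable_comp_emb
      (MeasurableEquiv.measurableEmbedding _)]
    have h1 : Integrable (fun x : ℝ => Real.exp (-(1/2) * x ^ 2)) :=
      integrable_exp_neg_mul_sq (by norm_num)
    have h2 := Integrable.mul_prod h1 h1
    apply h2.congr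
    filter_upwards with p
    show Real.exp _ * Real.exp _ =
      Real.exp (-(1/2) * ‖(Complex.measurableEquivRealProd.symm p : ℂ)‖ ^ 2)
    rw [← Real.exp_add]
    congr 1
    have hz : (Complex.measurableEquivRealProd.symm p : ℂ) = ⟨p.1, p.2⟩ := rfl
    rw [hz]
    have hn : ‖(⟨p.1, p.2⟩ : ℂ)‖ ^ 2 = p.1 ^ 2 + p.2 ^ 2 := by
      rw [Complex.sq_norm, Complex.normSq_mk]; ring
    rw [hn]; ring
  have hmeas : AEStronglyMeasurable
      (fun z : ℂ => ‖z‖ ^ n * Real.exp (a * ‖z‖ - ‖z‖ ^ 2)) volume := by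
    apply Continuous.aestronglyMeasurable
    continuity
  refine ((hbase.const_mul ((n.factorial : ℝ) * Real.exp ((a+1)^2 / 2))).mono' hmeas ?_)
  filter_upwards with z
  have h0 : (0:ℝ) ≤ ‖z‖ := norm_nonneg z
  rw [Real.norm_of_nonneg (by positivity)]
  have h1 : ‖z‖ ^ n ≤ (n.factorial : ℝ) * Real.exp ‖z‖ := pow_le_factorial_mul_exp h0 n
  have h2 : Real.exp ‖z‖ * Real.exp (a * ‖z‖ - ‖z‖ ^ 2)
      ≤ Real.exp ((a+1)^2/2) * Real.exp (-(1/2) * ‖z‖ ^ 2) := by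
    rw [← Real.exp_add, ← Real.exp_add]
    apply Real.exp_le_exp.2
    nlinarith [sq_nonneg ((a+1) - ‖z‖), sq_nonneg ‖z‖]
  calc ‖z‖ ^ n * Real.exp (a * ‖z‖ - ‖z‖ ^ 2)
      ≤ ((n.factorial : ℝ) * Real.exp ‖z‖) * Real.exp (a * ‖z‖ - ‖z‖ ^ 2) := by
        exact mul_le_mul_of_nonneg_right h1 (Real.exp_nonneg _)
    _ = (n.factorial : ℝ) * (Real.exp ‖z‖ * Real.exp (a * ‖z‖ - ‖z‖ ^ 2)) := by ring
    _ ≤ (n.factorial : ℝ) * (Real.exp ((a+1)^2/2) * Real.exp (-(1/2) * ‖z‖ ^ 2)) := by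
        exact mul_le_mul_of_nonneg_left h2 (by positivity)
    _ = (n.factorial : ℝ) * Real.exp ((a+1)^2 / 2) * Real.exp (-(1/2) * ‖z‖ ^ 2) := by ring

lemma norm_integrand (χ lam : ℂ) (n : ℕ) (z : ℂ) :
    ‖z ^ n * Complex.exp ((starRingEnd ℂ) (χ * z) + lam * z - (‖z‖ : ℂ) ^ 2)‖ ≤
      ‖z‖ ^ n * Real.exp ((‖χ‖ + ‖lam‖) * ‖z‖ - ‖z‖ ^ 2) := by
  rw [norm_mul, norm_pow]
  rw [show ‖Complex.exp ((starRingEnd ℂ) (χ * z) + lam * z - (‖z‖ : ℂ) ^ 2)‖ =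
    Real.exp (((starRingEnd ℂ) (χ * z) + lam * z - (‖z‖ : ℂ) ^ 2).re) from by
      rw [Complex.norm_exp]]
  apply mul_le_mul_of_nonneg_left _ (by positivity)
  apply Real.exp_le_exp.2
  have h1 : ((starRingEnd ℂ) (χ * z)).re ≤ ‖χ‖ * ‖z‖ := by
    rw [Complex.conj_re]
    calc (χ * z).re ≤ ‖χ * z‖ := Complex.re_le_norm _
      _ = ‖χ‖ * ‖z‖ := norm_mul _ _
  have h2 : (lam * z).re ≤ ‖lam‖ * ‖z‖ := by
    calc (lam * z).re ≤ ‖lam * z‖ := Complex.re_le_norm _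
      _ = ‖lam‖ * ‖z‖ := norm_mul _ _
  have h3 : (((‖z‖ : ℂ)) ^ 2).re = ‖z‖ ^ 2 := by
    rw [← Complex.ofReal_pow, Complex.ofReal_re]
  simp only [Complex.sub_re, Complex.add_re, h3]
  nlinarith

lemma integrand_continuous (χ lam : ℂ) (n : ℕ) :
    Continuous (fun z : ℂ =>
      z ^ n * Complex.exp ((starRingEnd ℂ) (χ * z) + lam * z - (‖z‖ : ℂ) ^ 2)) := by
  apply Continuous.mul (continuous_pow n)
  apply Complex.continuous_exp.comp
  apply Continuous.sub
  · exact (Complex.continuous_conj.comp (continuous_const.mul continuous_id)).add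
      (continuous_const.mul continuous_id)
  · exact (Complex.continuous_ofReal.comp continuous_norm).pow 2

lemma integrable_integrand (χ lam : ℂ) (n : ℕ) :
    Integrable (fun z : ℂ =>
      z ^ n * Complex.exp ((starRingEnd ℂ) (χ * z) + lam * z - (‖z‖ : ℂ) ^ 2)) := by
  refine (gauss_int_aux n (‖χ‖ + ‖lam‖)).mono'
    (integrand_continuous χ lam n).aestronglyMeasurable ?_
  filter_upwards with z
  exact norm_integrand χ lam n z

lemma exponent_eq (χ lam : ℂ) (x y : ℝ) :
    (starRingEnd ℂ) (χ * ((x : ℂ) + y * Complex.I)) + lam * ((x : ℂ) + y * Complex.I) -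
        (‖(x : ℂ) + y * Complex.I‖ : ℂ) ^ 2 =
      (-1 * (x : ℂ) ^ 2 + ((starRingEnd ℂ) χ + lam) * (x : ℂ) + 0) +
        (-1 * (y : ℂ) ^ 2 + ((lam - (starRingEnd ℂ) χ) * Complex.I) * (y : ℂ) + 0) := by
  have hnorm : ((‖(x : ℂ) + y * Complex.I‖ : ℝ) : ℂ) ^ 2 = (x : ℂ) ^ 2 + (y : ℂ) ^ 2 := by
    norm_cast
    rw [← Complex.mk_eq_add_mul_I, Complex.sq_norm, Complex.normSq_mk]
    ring
  rw [hnorm]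
  simp only [map_mul, map_add, Complex.conj_ofReal, Complex.conj_I]
  ring

lemma g_zero (χ lam : ℂ) :
    (∫ z : ℂ, Complex.exp ((starRingEnd ℂ) (χ * z) + lam * z - (‖z‖ : ℂ) ^ 2)) =
      (Real.pi : ℂ) * Complex.exp (lam * (starRingEnd ℂ) χ) := by
  rw [← (Complex.volume_preserving_equiv_real_prod.symm).integral_comp
      (MeasurableEquiv.measurableEmbedding _)
      (fun z : ℂ => Complex.exp ((starRingEnd ℂ) (χ * z) + lam * z - (‖z‖ : ℂ) ^ 2))]
  have hsymm : ∀ p : ℝ × ℝ,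
      (Complex.measurableEquivRealProd.symm p : ℂ) = (p.1 : ℂ) + p.2 * Complex.I := by
    intro p
    rw [Complex.measurableEquivRealProd_symm_apply, Complex.mk_eq_add_mul_I]
  have heq : ∀ p : ℝ × ℝ,
      Complex.exp ((starRingEnd ℂ) (χ * (Complex.measurableEquivRealProd.symm p)) +
          lam * (Complex.measurableEquivRealProd.symm p) -
          (‖(Complex.measurableEquivRealProd.symm p : ℂ)‖ : ℂ) ^ 2) =
        Complex.exp (-1 * (p.1 : ℂ) ^ 2 + ((starRingEnd ℂ) χ + lam) * (p.1 : ℂ) + 0) *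
          Complex.exp (-1 * (p.2 : ℂ) ^ 2 +
            ((lam - (starRingEnd ℂ) χ) * Complex.I) * (p.2 : ℂ) + 0) := by
    intro p
    rw [hsymm p, exponent_eq, Complex.exp_add]
  simp_rw [heq]
  rw [MeasureTheory.Measure.volume_eq_prod,
    MeasureTheory.integral_prod_mul
      (f := fun a : ℝ => Complex.exp (-1 * (a:ℂ)^2 + ((starRingEnd ℂ) χ + lam) * (a:ℂ) + 0))
      (g := fun b : ℝ => Complex.exp (-1 * (b:ℂ)^2 +
        ((lam - (starRingEnd ℂ) χ) * Complex.I) * (b:ℂ) + 0))]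
  have hb : (-1 : ℂ).re < 0 := by norm_num
  rw [integral_cexp_quadratic hb, integral_cexp_quadratic hb]
  have hpi : ((Real.pi : ℂ) / -(-1)) ^ ((1:ℂ)/2) * ((Real.pi : ℂ) / -(-1)) ^ ((1:ℂ)/2)
      = (Real.pi : ℂ) := by
    rw [neg_neg, div_one, ← Complex.cpow_add _ _ (by exact_mod_cast Real.pi_ne_zero)]
    norm_num
  calc ((Real.pi:ℂ) / -(-1)) ^ ((1:ℂ)/2) *
        Complex.exp (0 - ((starRingEnd ℂ) χ + lam) ^ 2 / (4 * -1)) *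
        (((Real.pi:ℂ) / -(-1)) ^ ((1:ℂ)/2) *
        Complex.exp (0 - ((lam - (starRingEnd ℂ) χ) * Complex.I) ^ 2 / (4 * -1)))
      = (((Real.pi:ℂ) / -(-1)) ^ ((1:ℂ)/2) * ((Real.pi:ℂ) / -(-1)) ^ ((1:ℂ)/2)) *
        (Complex.exp (0 - ((starRingEnd ℂ) χ + lam) ^ 2 / (4 * -1)) *
         Complex.exp (0 - ((lam - (starRingEnd ℂ) χ) * Complex.I) ^ 2 / (4 * -1))) := by ring
    _ = (Real.pi : ℂ) * Complex.exp (lam * (starRingEnd ℂ) χ) := by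
        rw [hpi, ← Complex.exp_add]
        have hI : Complex.I ^ 2 = -1 := Complex.I_sq
        have harg : 0 - ((starRingEnd ℂ) χ + lam) ^ 2 / (4 * -1) +
            (0 - ((lam - (starRingEnd ℂ) χ) * Complex.I) ^ 2 / (4 * -1)) =
            lam * (starRingEnd ℂ) χ := by
          linear_combination (((lam - (starRingEnd ℂ) χ) ^ 2) / 4) * hI
        rw [harg]

lemma g_hasDeriv (χ : ℂ) (n : ℕ) (lam₀ : ℂ) :
    HasDerivAt (fun lam : ℂ => ∫ z : ℂ,
        z ^ n * Complex.exp ((starRingEnd ℂ) (χ * z) + lam * z - (‖z‖ : ℂ) ^ 2))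
      (∫ z : ℂ, z ^ (n+1) * Complex.exp ((starRingEnd ℂ) (χ * z) + lam₀ * z - (‖z‖ : ℂ) ^ 2))
      lam₀ := by
  have key := hasDerivAt_integral_of_dominated_loc_of_deriv_le (μ := volume) (x₀ := lam₀)
    (s := Metric.ball lam₀ 1) (Metric.ball_mem_nhds lam₀ one_pos)
    (F := fun lam (z : ℂ) =>
      z ^ n * Complex.exp ((starRingEnd ℂ) (χ * z) + lam * z - (‖z‖ : ℂ) ^ 2))
    (F' := fun lam (z : ℂ) =>
      z ^ (n+1) * Complex.exp ((starRingEnd ℂ) (χ * z) + lam * z - (‖z‖ : ℂ) ^ 2))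
    (bound := fun z : ℂ => ‖z‖ ^ (n+1) * Real.exp ((‖χ‖ + (‖lam₀‖ + 1)) * ‖z‖ - ‖z‖ ^ 2))
    ?_ ?_ ?_ ?_ ?_ ?_
  · exact key.2
  · filter_upwards with lam
    exact (integrand_continuous χ lam n).aestronglyMeasurable
  · exact integrable_integrand χ lam₀ n
  · exact (integrand_continuous χ lam₀ (n+1)).aestronglyMeasurable
  · filter_upwards with z
    intro lam hlam
    have hl : ‖lam‖ ≤ ‖lam₀‖ + 1 := by
      have := mem_ball_iff_norm.1 hlam
      calc ‖lam‖ = ‖lam₀ + (lam - lam₀)‖ := by ring_nf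
        _ ≤ ‖lam₀‖ + ‖lam - lam₀‖ := norm_add_le _ _
        _ ≤ ‖lam₀‖ + 1 := by linarith
    refine (norm_integrand χ lam (n+1) z).trans ?_
    apply mul_le_mul_of_nonneg_left _ (by positivity)
    apply Real.exp_le_exp.2
    have : (‖χ‖ + ‖lam‖) * ‖z‖ ≤ (‖χ‖ + (‖lam₀‖ + 1)) * ‖z‖ :=
      mul_le_mul_of_nonneg_right (by linarith) (norm_nonneg z)
    linarith
  · exact gauss_int_aux (n+1) (‖χ‖ + (‖lam₀‖ + 1))
  · filter_upwards with z
    intro lam _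
    have hd : HasDerivAt
        (fun lam : ℂ => (starRingEnd ℂ) (χ * z) + lam * z - (‖z‖ : ℂ) ^ 2) z lam := by
      simpa using (((hasDerivAt_id lam).mul_const z).const_add
        ((starRingEnd ℂ) (χ * z))).sub_const ((‖z‖ : ℂ) ^ 2)
    have := (hd.cexp).const_mul (z ^ n)
    exact this.congr_deriv (by ring)

lemma g_formula (χ : ℂ) (n : ℕ) : ∀ lam : ℂ,
    (∫ z : ℂ, z ^ n * Complex.exp ((starRingEnd ℂ) (χ * z) + lam * z - (‖z‖ : ℂ) ^ 2)) =
      (Real.pi : ℂ) * ((starRingEnd ℂ) χ) ^ n * Complex.exp (lam * (starRingEnd ℂ) χ) := by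
  induction n with
  | zero =>
    intro lam
    simpa using g_zero χ lam
  | succ n ih =>
    intro lam
    have h1 := g_hasDeriv χ n lam
    have h2 : HasDerivAt
        (fun lam : ℂ => ∫ z : ℂ,
          z ^ n * Complex.exp ((starRingEnd ℂ) (χ * z) + lam * z - (‖z‖ : ℂ) ^ 2))
        ((Real.pi : ℂ) * ((starRingEnd ℂ) χ) ^ n *
          (Complex.exp (lam * (starRingEnd ℂ) χ) * (starRingEnd ℂ) χ)) lam := by
      have hknown : HasDerivAt
          (fun lam : ℂ => (Real.pi : ℂ) * ((starRingEnd ℂ) χ) ^ n *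
            Complex.exp (lam * (starRingEnd ℂ) χ))
          ((Real.pi : ℂ) * ((starRingEnd ℂ) χ) ^ n *
            (Complex.exp (lam * (starRingEnd ℂ) χ) * (starRingEnd ℂ) χ)) lam :=
        ((hasDerivAt_mul_const ((starRingEnd ℂ) χ)).cexp).const_mul _
      exact hknown.congr_of_eventuallyEq (Filter.Eventually.of_forall fun x => ih x)
    rw [h1.unique h2]
    ring

lemma monomial_integral (χ : ℂ) (n : ℕ) :
    (∫ z : ℂ, z ^ n * Complex.exp ((starRingEnd ℂ) (χ * z) - (‖z‖ : ℂ) ^ 2)) =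
      (Real.pi : ℂ) * ((starRingEnd ℂ) χ) ^ n := by
  have h := g_formula χ n 0
  simpa using h

lemma integrable_integrand' (χ : ℂ) (n : ℕ) :
    Integrable (fun z : ℂ =>
      z ^ n * Complex.exp ((starRingEnd ℂ) (χ * z) - (‖z‖ : ℂ) ^ 2)) := by
  have := integrable_integrand χ 0 n
  simpa using this

theorem stmt17 (p : Polynomial ℂ) (χ : ℂ) :
    (1 / (Real.pi : ℂ)) *
        ∫ z : ℂ, Complex.exp ((starRingEnd ℂ) (χ * z)) * p.eval z *
          Complex.exp (-(‖z‖ : ℂ) ^ 2) =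
      p.eval ((starRingEnd ℂ) χ) := by
  have hpi : (Real.pi : ℂ) ≠ 0 := by exact_mod_cast Real.pi_ne_zero
  have hint : ∀ z : ℂ,
      Complex.exp ((starRingEnd ℂ) (χ * z)) * p.eval z * Complex.exp (-(‖z‖ : ℂ) ^ 2) =
        ∑ k ∈ Finset.range (p.natDegree + 1), p.coeff k *
          (z ^ k * Complex.exp ((starRingEnd ℂ) (χ * z) - (‖z‖ : ℂ) ^ 2)) := by
    intro z
    rw [Polynomial.eval_eq_sum_range, Finset.mul_sum, Finset.sum_mul]
    refine Finset.sum_congr rfl fun k _ => ?_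
    rw [sub_eq_add_neg, Complex.exp_add]
    ring
  rw [MeasureTheory.integral_congr_ae (Filter.Eventually.of_forall hint),
    MeasureTheory.integral_finset_sum _
      (fun k _ => (integrable_integrand' χ k).const_mul (p.coeff k))]
  simp_rw [MeasureTheory.integral_const_mul, monomial_integral]
  rw [Finset.mul_sum, Polynomial.eval_eq_sum_range]
  refine Finset.sum_congr rfl fun k _ => ?_
  field_simp
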